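/- Let cost_E(x) = E[max_s Y_s · c_s(x)] and cost_T(x) = min_B (B + Σ_s p_s (c_s(x) - B)⁺), where for each feasible x, c_s(x) ≥ 0 and the Y_s are independent Bernoullis with parameters p_s summing to at least 1. If x_T minimizes cost_T over a feasible set F and x satisfies cost_T(x) ≤ α · cost_T(x_T) for some α ≥ 1, then cost_E(x) ≤ (α/(1 - 1/e)) · inf_{y ∈ F} cost_E(y). -/
import Mathlib

open Finset

set_option linter.unusedSectionVars false

/-- Expected value of `max_{s ∈ A} v s` (with `max ∅ = 0`) where each index `s`
is included in `A` independently with probability `p s`. -/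
noncomputable def expectedMax {m : ℕ} (p v : Fin m → ℝ) : ℝ :=
  ∑ A : Finset (Fin m),
    (∏ s ∈ A, p s) * (∏ s ∈ Aᶜ, (1 - p s)) * (A.fold max 0 v)

/-- The truncated two-stage objective `min_B (B + Σ_s p_s (c_s - B)⁺)`. -/
noncomputable def costTrunc {m : ℕ} (p c : Fin m → ℝ) : ℝ :=
  ⨅ B : ℝ, (B + ∑ s, p s * max (c s - B) 0)

section helpers

variable {ι : Type*} [DecidableEq ι]

noncomputable def Wt (p : ι → ℝ) (t A : Finset ι) : ℝ :=
  (∏ s ∈ A, p s) * ∏ s ∈ t \ A, (1 - p s)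

lemma sumWt (p : ι → ℝ) (t : Finset ι) : ∑ A ∈ t.powerset, Wt p t A = 1 := by
  have h := Finset.prod_add p (fun s => 1 - p s) t
  simp only [add_sub_cancel, Finset.prod_const_one] at h
  exact h.symm

lemma Wt_nonneg (p : ι → ℝ) (hp0 : ∀ s, 0 ≤ p s) (hp1 : ∀ s, p s ≤ 1) (t A : Finset ι) :
    0 ≤ Wt p t A := by
  unfold Wt
  apply mul_nonneg
  · exact Finset.prod_nonneg fun s _ => hp0 s
  · exact Finset.prod_nonneg fun s _ => by linarith [hp1 s]

lemma sumWt_mem (p : ι → ℝ) (t : Finset ι) {s0 : ι} (hs0 : s0 ∈ t) :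
    ∑ A ∈ t.powerset, (if s0 ∈ A then Wt p t A else 0) = p s0 := by
  have ht : t = insert s0 (t.erase s0) := (Finset.insert_erase hs0).symm
  rw [ht, Finset.sum_powerset_insert (Finset.notMem_erase s0 t)]
  have h1 : ∑ A ∈ (t.erase s0).powerset,
      (if s0 ∈ A then Wt p (insert s0 (t.erase s0)) A else 0) = 0 := by
    apply Finset.sum_eq_zero
    intro A hA
    have : s0 ∉ A := fun h => Finset.notMem_erase s0 t (Finset.mem_powerset.1 hA h)
    simp [this]
  rw [h1, zero_add]
  have h2 : ∀ A ∈ (t.erase s0).powerset,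
      (if s0 ∈ insert s0 A then Wt p (insert s0 (t.erase s0)) (insert s0 A) else 0)
        = p s0 * Wt p (t.erase s0) A := by
    intro A hA
    have hAsub : A ⊆ t.erase s0 := Finset.mem_powerset.1 hA
    have hs0A : s0 ∉ A := fun h => Finset.notMem_erase s0 t (hAsub h)
    rw [if_pos (Finset.mem_insert_self _ _)]
    unfold Wt
    rw [Finset.prod_insert hs0A]
    have hset : insert s0 (t.erase s0) \ insert s0 A = t.erase s0 \ A := by
      ext a
      by_cases has : a = s0
      · subst has; simp [Finset.notMem_erase]
      · simp [has]
    rw [hset]; ring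
  rw [Finset.sum_congr rfl h2, ← Finset.mul_sum, sumWt, mul_one]

lemma sumWt_disj (p : ι → ℝ) {T t : Finset ι} (hT : T ⊆ t) :
    ∑ A ∈ t.powerset, (if (A ∩ T).Nonempty then 0 else Wt p t A) = ∏ s ∈ T, (1 - p s) := by
  have step1 : ∑ A ∈ t.powerset, (if (A ∩ T).Nonempty then 0 else Wt p t A)
      = ∑ A ∈ (t \ T).powerset, Wt p t A := by
    rw [← Finset.sum_filter_add_sum_filter_not t.powerset (fun A => (A ∩ T).Nonempty)]
    have e1 : ∑ A ∈ t.powerset.filter (fun A => (A ∩ T).Nonempty),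
        (if (A ∩ T).Nonempty then (0:ℝ) else Wt p t A) = 0 := by
      apply Finset.sum_eq_zero; intro A hA
      rw [if_pos (Finset.mem_filter.1 hA).2]
    rw [e1, zero_add]
    have e2 : t.powerset.filter (fun A => ¬(A ∩ T).Nonempty) = (t \ T).powerset := by
      ext A
      simp only [Finset.mem_filter, Finset.mem_powerset, Finset.not_nonempty_iff_eq_empty,
        ← Finset.disjoint_iff_inter_eq_empty, Finset.subset_sdiff]
    rw [e2]
    apply Finset.sum_congr rfl; intro A hA
    rw [if_neg]
    rw [Finset.not_nonempty_iff_eq_empty, ← Finset.disjoint_iff_inter_eq_empty]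
    exact (Finset.subset_sdiff.1 (Finset.mem_powerset.1 hA)).2
  rw [step1]
  have step2 : ∀ A ∈ (t \ T).powerset, Wt p t A = Wt p (t \ T) A * ∏ s ∈ T, (1 - p s) := by
    intro A hA
    have hAsub := Finset.mem_powerset.1 hA
    have hTsub : T ⊆ t \ A := by
      intro a ha
      rw [Finset.mem_sdiff]
      refine ⟨hT ha, fun hmem => ?_⟩
      exact (Finset.mem_sdiff.1 (hAsub hmem)).2 ha
    unfold Wt
    rw [← Finset.prod_sdiff hTsub, sdiff_sdiff_comm]
    ring
  rw [Finset.sum_congr rfl step2, ← Finset.sum_mul, sumWt, one_mul]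

lemma sumWt_hit (p : ι → ℝ) {T t : Finset ι} (hT : T ⊆ t) :
    ∑ A ∈ t.powerset, (if (A ∩ T).Nonempty then Wt p t A else 0)
      = 1 - ∏ s ∈ T, (1 - p s) := by
  have key : ∀ A, (if (A ∩ T).Nonempty then Wt p t A else 0)
      = Wt p t A - (if (A ∩ T).Nonempty then 0 else Wt p t A) := by
    intro A; split <;> ring
  rw [Finset.sum_congr rfl (fun A _ => key A), Finset.sum_sub_distrib, sumWt, sumWt_disj p hT]

lemma sumWt_linear (p : ι → ℝ) (t : Finset ι) (u : ι → ℝ) :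
    ∑ A ∈ t.powerset, Wt p t A * ∑ s ∈ A, u s = ∑ s ∈ t, p s * u s := by
  have key : ∀ s0 ∈ t,
      ∑ A ∈ t.powerset, (if s0 ∈ A then Wt p t A * u s0 else 0) = p s0 * u s0 := by
    intro s0 hs0
    calc ∑ A ∈ t.powerset, (if s0 ∈ A then Wt p t A * u s0 else 0)
        = (∑ A ∈ t.powerset, (if s0 ∈ A then Wt p t A else 0)) * u s0 := by
          rw [Finset.sum_mul]
          exact Finset.sum_congr rfl fun A _ => by split <;> simp
      _ = p s0 * u s0 := by rw [sumWt_mem p t hs0]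
  calc ∑ A ∈ t.powerset, Wt p t A * ∑ s ∈ A, u s
      = ∑ A ∈ t.powerset, ∑ s ∈ t, (if s ∈ A then Wt p t A * u s else 0) := by
        apply Finset.sum_congr rfl; intro A hA
        rw [Finset.mul_sum, Finset.sum_ite_mem,
          Finset.inter_eq_right.2 (Finset.mem_powerset.1 hA)]
    _ = ∑ s ∈ t, ∑ A ∈ t.powerset, (if s ∈ A then Wt p t A * u s else 0) := Finset.sum_comm
    _ = ∑ s ∈ t, p s * u s := Finset.sum_congr rfl fun s hs => key s hs

lemma fold_nonneg' (A : Finset ι) (v : ι → ℝ) : 0 ≤ A.fold max 0 v :=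
  (Finset.le_fold_max 0).2 (Or.inl le_rfl)

lemma fold_eq_zero' (A : Finset ι) (v : ι → ℝ) (h : ∀ s ∈ A, v s ≤ 0) :
    A.fold max 0 v = 0 :=
  le_antisymm ((Finset.fold_max_le 0).2 ⟨le_rfl, h⟩) (fold_nonneg' A v)

lemma fold_le_trunc (v : ι → ℝ) {B : ℝ} (hB : 0 ≤ B) (A : Finset ι) :
    A.fold max 0 v ≤ B + ∑ s ∈ A, max (v s - B) 0 := by
  rw [Finset.fold_max_le]
  have hnn : 0 ≤ ∑ s ∈ A, max (v s - B) 0 :=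
    Finset.sum_nonneg fun s _ => le_max_right _ _
  refine ⟨by linarith, fun s hs => ?_⟩
  have h1 : max (v s - B) 0 ≤ ∑ t ∈ A, max (v t - B) 0 :=
    Finset.single_le_sum (fun t _ => le_max_right (v t - B) 0) hs
  have h2 : v s - B ≤ max (v s - B) 0 := le_max_left _ _
  linarith

lemma fold_split (c : ι → ℝ) {B : ℝ} (hB : 0 ≤ B) (S : Finset ι)
    (hS : ∀ s, s ∈ S ↔ B ≤ c s) (A : Finset ι) :
    (if (A ∩ S).Nonempty then B else 0) + A.fold max 0 (fun s => max (c s - B) 0)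
      ≤ A.fold max 0 c := by
  induction A using Finset.induction_on with
  | empty => simp
  | @insert a A ha IH =>
    rw [Finset.fold_insert ha, Finset.fold_insert ha]
    rcases le_or_gt B (c a) with haS | haS
    · have haSm : a ∈ S := (hS a).2 haS
      have hne : ((insert a A) ∩ S).Nonempty :=
        ⟨a, Finset.mem_inter.2 ⟨Finset.mem_insert_self _ _, haSm⟩⟩
      rw [if_pos hne]
      have hma : max (c a - B) 0 = c a - B := max_eq_left (by linarith)
      rw [hma]
      rcases le_total (A.fold max 0 (fun s => max (c s - B) 0)) (c a - B) with h2 | h2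
      · rw [max_eq_left h2]
        calc B + (c a - B) = c a := by ring
          _ ≤ max (c a) (A.fold max 0 c) := le_max_left _ _
      · rw [max_eq_right h2]
        rcases (A ∩ S).eq_empty_or_nonempty with hAS | hAS
        · have hz : A.fold max 0 (fun s => max (c s - B) 0) = 0 := by
            apply fold_eq_zero'
            intro s hsA
            have hns : s ∉ S := fun hsS =>
              Finset.notMem_empty s (hAS ▸ Finset.mem_inter.2 ⟨hsA, hsS⟩)
            have hlt : c s < B := lt_of_not_ge (fun hle => hns ((hS s).2 hle))
            simp only [max_le_iff]
            constructor <;> linarith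
          rw [hz, add_zero]
          exact le_max_of_le_left haS
        · rw [if_pos hAS] at IH
          exact le_max_of_le_right IH
    · have haSm : a ∉ S := fun h => absurd ((hS a).1 h) (not_le.2 haS)
      have hcond : ((insert a A) ∩ S) = A ∩ S := Finset.insert_inter_of_notMem haSm
      rw [hcond]
      have hma : max (c a - B) 0 = 0 := max_eq_right (by linarith)
      rw [hma, max_eq_right (fold_nonneg' A _)]
      exact le_trans IH (le_max_right _ _)

lemma prod_one_sub_le_exp (p : ι → ℝ) (hp1 : ∀ s, p s ≤ 1) (T : Finset ι) :
    ∏ s ∈ T, (1 - p s) ≤ Real.exp (-∑ s ∈ T, p s) := by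
  calc ∏ s ∈ T, (1 - p s) ≤ ∏ s ∈ T, Real.exp (-p s) := by
        apply Finset.prod_le_prod
        · intro s _; linarith [hp1 s]
        · intro s _; linarith [Real.add_one_le_exp (-p s)]
    _ = Real.exp (∑ s ∈ T, (-p s)) := (Real.exp_sum T _).symm
    _ = Real.exp (-∑ s ∈ T, p s) := by rw [Finset.sum_neg_distrib]

lemma one_sub_exp_ge {x : ℝ} (h0 : 0 ≤ x) (h1 : x ≤ 1) :
    (1 - (Real.exp 1)⁻¹) * x ≤ 1 - Real.exp (-x) := by
  have hc := convexOn_exp.2 (Set.mem_univ (-1 : ℝ)) (Set.mem_univ (0 : ℝ))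
    h0 (by linarith : (0:ℝ) ≤ 1 - x) (by ring)
  simp only [smul_eq_mul, mul_zero, mul_neg, mul_one, add_zero, Real.exp_zero] at hc
  rw [Real.exp_neg]
  have he : Real.exp (-1) = (Real.exp 1)⁻¹ := Real.exp_neg 1
  rw [he, Real.exp_neg] at hc
  linarith

end helpers

lemma expectedMax_eq {m : ℕ} (p v : Fin m → ℝ) :
    expectedMax p v
      = ∑ A ∈ (univ : Finset (Fin m)).powerset, Wt p univ A * A.fold max 0 v := by
  rw [Finset.powerset_univ]
  unfold expectedMax Wt
  exact Finset.sum_congr rfl fun A _ => by rw [Finset.compl_eq_univ_sdiff]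

lemma corr_gap {m : ℕ} (p : Fin m → ℝ) (hp0 : ∀ s, 0 ≤ p s) (hp1 : ∀ s, p s ≤ 1) :
    ∀ (n : ℕ) (v : Fin m → ℝ), (∀ s, 0 ≤ v s) →
      (univ.filter (fun s => 0 < v s)).card ≤ n →
      ∑ s ∈ univ.filter (fun s => 0 < v s), p s ≤ 1 →
      (1 - (Real.exp 1)⁻¹) * ∑ s, p s * v s ≤ expectedMax p v := by
  have zero_case : ∀ (v : Fin m → ℝ), (∀ s, 0 ≤ v s) →
      univ.filter (fun s => 0 < v s) = ∅ →
      (1 - (Real.exp 1)⁻¹) * ∑ s, p s * v s ≤ expectedMax p v := by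
    intro v hv hemp
    have hz : ∀ s, v s = 0 := by
      intro s
      by_contra h
      have h0 : 0 < v s := lt_of_le_of_ne (hv s) (Ne.symm h)
      have hmem : s ∈ univ.filter (fun s => 0 < v s) :=
        Finset.mem_filter.2 ⟨Finset.mem_univ s, h0⟩
      rw [hemp] at hmem; exact Finset.notMem_empty s hmem
    have h1 : ∑ s, p s * v s = 0 := Finset.sum_eq_zero fun s _ => by rw [hz s, mul_zero]
    have h2 : expectedMax p v = 0 := by
      rw [expectedMax_eq]
      exact Finset.sum_eq_zero fun A _ => by
        rw [fold_eq_zero' A v (fun s _ => (hz s).le), mul_zero]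
    rw [h1, h2, mul_zero]
  intro n
  induction n with
  | zero =>
    intro v hv hcard hsum'
    exact zero_case v hv (Finset.card_eq_zero.1 (Nat.le_zero.1 hcard))
  | succ n IH =>
    intro v hv hcard hsum'
    set T := univ.filter (fun s => 0 < v s) with hTdef
    rcases T.eq_empty_or_nonempty with hT | hT
    · exact zero_case v hv hT
    · have hTim : (T.image v).Nonempty := hT.image v
      set δ := (T.image v).min' hTim with hδdef
      obtain ⟨s0, hs0T, hs0⟩ := Finset.mem_image.1 ((T.image v).min'_mem hTim)
      have hs0' : v s0 = δ := by rw [hδdef]; exact hs0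
      have hδpos : 0 < δ := hs0' ▸ (Finset.mem_filter.1 hs0T).2
      have hδle : ∀ s ∈ T, δ ≤ v s := fun s hs =>
        Finset.min'_le _ _ (Finset.mem_image_of_mem v hs)
      set v' := fun s => max (v s - δ) 0 with hv'def
      have hv'0 : ∀ s, 0 ≤ v' s := fun s => le_max_right _ _
      have hsupp : univ.filter (fun s => 0 < v' s) ⊆ T.erase s0 := by
        intro s hs
        have h2 := (Finset.mem_filter.1 hs).2
        simp only [hv'def] at h2
        rcases lt_max_iff.1 h2 with h3 | h3
        · have hlt : δ < v s := by linarith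
          refine Finset.mem_erase.2 ⟨?_,
            Finset.mem_filter.2 ⟨Finset.mem_univ s, by linarith⟩⟩
          rintro rfl
          rw [hs0'] at hlt
          exact lt_irrefl δ hlt
        · exact absurd h3 (lt_irrefl 0)
      have hcard' : (univ.filter (fun s => 0 < v' s)).card ≤ n := by
        have hc1 := Finset.card_le_card hsupp
        rw [Finset.card_erase_of_mem hs0T] at hc1
        omega
      have hsub : univ.filter (fun s => 0 < v' s) ⊆ T :=
        hsupp.trans (Finset.erase_subset _ _)
      have hsum'' : ∑ s ∈ univ.filter (fun s => 0 < v' s), p s ≤ 1 :=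
        le_trans (Finset.sum_le_sum_of_subset_of_nonneg hsub (fun s _ _ => hp0 s)) hsum'
      have hIH := IH v' hv'0 hcard' hsum''
      have hS : ∀ s, s ∈ T ↔ δ ≤ v s := by
        intro s
        constructor
        · exact hδle s
        · intro h
          exact Finset.mem_filter.2 ⟨Finset.mem_univ s, lt_of_lt_of_le hδpos h⟩
      have hpoint : ∀ A : Finset (Fin m),
          (if (A ∩ T).Nonempty then δ else 0) + A.fold max 0 v' ≤ A.fold max 0 v :=
        fun A => fold_split v hδpos.le T hS A
      have hWnn := Wt_nonneg p hp0 hp1 (univ : Finset (Fin m))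
      have hstep : δ * (1 - ∏ s ∈ T, (1 - p s)) + expectedMax p v' ≤ expectedMax p v := by
        rw [expectedMax_eq p v, expectedMax_eq p v']
        have e1 : δ * (1 - ∏ s ∈ T, (1 - p s))
            = ∑ A ∈ (univ : Finset (Fin m)).powerset,
                Wt p univ A * (if (A ∩ T).Nonempty then δ else 0) := by
          have e2 : ∀ A : Finset (Fin m), Wt p univ A * (if (A ∩ T).Nonempty then δ else 0)
              = δ * (if (A ∩ T).Nonempty then Wt p univ A else 0) := by
            intro A; split <;> ring
          rw [Finset.sum_congr rfl (fun A _ => e2 A), ← Finset.mul_sum,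
            sumWt_hit p (Finset.subset_univ T)]
        calc δ * (1 - ∏ s ∈ T, (1 - p s))
              + ∑ A ∈ (univ : Finset (Fin m)).powerset, Wt p univ A * A.fold max 0 v'
            = ∑ A ∈ (univ : Finset (Fin m)).powerset,
                Wt p univ A * ((if (A ∩ T).Nonempty then δ else 0) + A.fold max 0 v') := by
              rw [e1, ← Finset.sum_add_distrib]
              exact Finset.sum_congr rfl fun A _ => (mul_add _ _ _).symm
          _ ≤ ∑ A ∈ (univ : Finset (Fin m)).powerset, Wt p univ A * A.fold max 0 v :=
              Finset.sum_le_sum fun A _ =>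
                mul_le_mul_of_nonneg_left (hpoint A) (hWnn A)
      have hTp0 : 0 ≤ ∑ s ∈ T, p s := Finset.sum_nonneg fun s _ => hp0 s
      have hprod := prod_one_sub_le_exp p hp1 T
      have hexp := one_sub_exp_ge hTp0 hsum'
      have hkey : δ * ((1 - (Real.exp 1)⁻¹) * ∑ s ∈ T, p s)
          ≤ δ * (1 - ∏ s ∈ T, (1 - p s)) :=
        mul_le_mul_of_nonneg_left (by linarith) hδpos.le
      have hid : ∑ s, p s * v s = (∑ s, p s * v' s) + δ * ∑ s ∈ T, p s := by
        have hTsum : δ * ∑ s ∈ T, p s = ∑ s, (if s ∈ T then δ * p s else 0) := by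
          rw [Finset.sum_ite_mem, Finset.univ_inter, Finset.mul_sum]
        rw [hTsum, ← Finset.sum_add_distrib]
        apply Finset.sum_congr rfl
        intro s _
        by_cases hsT : s ∈ T
        · have h1 : δ ≤ v s := hδle s hsT
          have h2 : v' s = v s - δ := max_eq_left (by linarith)
          rw [if_pos hsT, h2]; ring
        · have h1 : v s = 0 := by
            have hn : ¬ 0 < v s := fun h =>
              hsT (Finset.mem_filter.2 ⟨Finset.mem_univ s, h⟩)
            linarith [hv s]
          have h2 : v' s = 0 := by
            simp only [hv'def, h1]
            exact max_eq_right (by linarith)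
          rw [if_neg hsT, h1, h2]; ring
      calc (1 - (Real.exp 1)⁻¹) * ∑ s, p s * v s
          = δ * ((1 - (Real.exp 1)⁻¹) * ∑ s ∈ T, p s)
            + (1 - (Real.exp 1)⁻¹) * ∑ s, p s * v' s := by rw [hid]; ring
        _ ≤ δ * (1 - ∏ s ∈ T, (1 - p s)) + expectedMax p v' := add_le_add hkey hIH
        _ ≤ expectedMax p v := hstep

lemma costTrunc_obj_nonneg {m : ℕ} (p c : Fin m → ℝ) (hp0 : ∀ s, 0 ≤ p s)
    (hsum : 1 ≤ ∑ s, p s) (hc0 : ∀ s, 0 ≤ c s) (B : ℝ) :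
    0 ≤ B + ∑ s, p s * max (c s - B) 0 := by
  rcases le_or_gt 0 B with hB | hB
  · have h1 : 0 ≤ ∑ s, p s * max (c s - B) 0 :=
      Finset.sum_nonneg fun s _ => mul_nonneg (hp0 s) (le_max_right _ _)
    linarith
  · have h1 : ∀ s ∈ (univ : Finset (Fin m)), p s * (-B) ≤ p s * max (c s - B) 0 := by
      intro s _
      apply mul_le_mul_of_nonneg_left _ (hp0 s)
      exact le_max_of_le_left (by linarith [hc0 s])
    have h2 : (∑ s, p s) * (-B) ≤ ∑ s, p s * max (c s - B) 0 := by
      rw [Finset.sum_mul]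
      exact Finset.sum_le_sum h1
    have h3 : 1 * (-B) ≤ (∑ s, p s) * (-B) :=
      mul_le_mul_of_nonneg_right hsum (by linarith)
    linarith

lemma expectedMax_le_costTrunc {m : ℕ} (p c : Fin m → ℝ) (hp0 : ∀ s, 0 ≤ p s)
    (hp1 : ∀ s, p s ≤ 1) (hsum : 1 ≤ ∑ s, p s) (hc0 : ∀ s, 0 ≤ c s) :
    expectedMax p c ≤ costTrunc p c := by
  have main : ∀ B : ℝ, 0 ≤ B → expectedMax p c ≤ B + ∑ s, p s * max (c s - B) 0 := by
    intro B hB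
    rw [expectedMax_eq]
    have hWnn := Wt_nonneg p hp0 hp1 (univ : Finset (Fin m))
    calc ∑ A ∈ (univ : Finset (Fin m)).powerset, Wt p univ A * A.fold max 0 c
        ≤ ∑ A ∈ (univ : Finset (Fin m)).powerset,
            Wt p univ A * (B + ∑ s ∈ A, max (c s - B) 0) :=
          Finset.sum_le_sum fun A _ =>
            mul_le_mul_of_nonneg_left (fold_le_trunc c hB A) (hWnn A)
      _ = B + ∑ s, p s * max (c s - B) 0 := by
          rw [Finset.sum_congr rfl
            (fun (A : Finset (Fin m)) (_ : A ∈ (univ : Finset (Fin m)).powerset) =>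
              mul_add (Wt p univ A) B (∑ s ∈ A, max (c s - B) 0)),
            Finset.sum_add_distrib, ← Finset.sum_mul, sumWt, one_mul,
            sumWt_linear p univ (fun s => max (c s - B) 0)]
  unfold costTrunc
  apply le_ciInf
  intro B
  rcases le_or_gt 0 B with hB | hB
  · exact main B hB
  · have h0 := main 0 le_rfl
    have e1 : ∑ s, p s * max (c s - 0) 0 = ∑ s, p s * c s := by
      apply Finset.sum_congr rfl
      intro s _
      rw [sub_zero, max_eq_left (hc0 s)]
    rw [e1, zero_add] at h0
    have e2 : ∑ s, p s * max (c s - B) 0 = (∑ s, p s * c s) - (∑ s, p s) * B := by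
      rw [Finset.sum_mul, ← Finset.sum_sub_distrib]
      apply Finset.sum_congr rfl
      intro s _
      rw [max_eq_left (by linarith [hc0 s])]
      ring
    rw [e2]
    have h4 : 0 ≤ (-B) * ((∑ s, p s) - 1) := mul_nonneg (by linarith) (by linarith)
    nlinarith

lemma costTrunc_le_expectedMax {m : ℕ} (p c : Fin m → ℝ) (hp0 : ∀ s, 0 ≤ p s)
    (hp1 : ∀ s, p s ≤ 1) (hsum : 1 ≤ ∑ s, p s) (hc0 : ∀ s, 0 ≤ c s) :
    (1 - (Real.exp 1)⁻¹) * costTrunc p c ≤ expectedMax p c := by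
  classical
  set cand := (insert (0:ℝ) (univ.image c)).filter
    (fun B => 1 ≤ ∑ s ∈ univ.filter (fun s => B ≤ c s), p s) with hcand
  have h0cand : (0:ℝ) ∈ cand := by
    rw [hcand, Finset.mem_filter]
    refine ⟨Finset.mem_insert_self _ _, ?_⟩
    have : univ.filter (fun s => (0:ℝ) ≤ c s) = univ := by
      apply Finset.filter_true_of_mem
      intro s _; exact hc0 s
    rw [this]; exact hsum
  have hcne : cand.Nonempty := ⟨0, h0cand⟩
  set B := cand.max' hcne with hBdef
  have hBcand : B ∈ cand := cand.max'_mem hcne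
  have hB0 : 0 ≤ B := Finset.le_max' cand 0 h0cand
  have hBge : 1 ≤ ∑ s ∈ univ.filter (fun s => B ≤ c s), p s := (Finset.mem_filter.1 hBcand).2
  set S := univ.filter (fun s => B ≤ c s) with hSdef
  set U := univ.filter (fun s => B < c s) with hUdef
  have hUle : ∑ s ∈ U, p s ≤ 1 := by
    rcases U.eq_empty_or_nonempty with h | h
    · rw [h, Finset.sum_empty]; linarith
    · have hUim : (U.image c).Nonempty := h.image c
      set B' := (U.image c).min' hUim with hB'def
      obtain ⟨s1, hs1U, hs1⟩ := Finset.mem_image.1 ((U.image c).min'_mem hUim)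
      have hs1' : c s1 = B' := by rw [hB'def]; exact hs1
      have hB'B : B < B' := hs1' ▸ (Finset.mem_filter.1 hs1U).2
      have hB'base : B' ∈ insert (0:ℝ) (univ.image c) :=
        Finset.mem_insert_of_mem (hs1' ▸ Finset.mem_image_of_mem c (Finset.mem_univ s1))
      have hnot : B' ∉ cand := fun hmem =>
        absurd (Finset.le_max' cand B' hmem) (not_le.2 hB'B)
      have hlt1 : ¬ (1 ≤ ∑ s ∈ univ.filter (fun s => B' ≤ c s), p s) := fun hge =>
        hnot (Finset.mem_filter.2 ⟨hB'base, hge⟩)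
      have hUeq : U = univ.filter (fun s => B' ≤ c s) := by
        ext s
        simp only [hUdef, Finset.mem_filter, Finset.mem_univ, true_and]
        constructor
        · intro hlt
          exact Finset.min'_le _ _
            (Finset.mem_image_of_mem c (Finset.mem_filter.2 ⟨Finset.mem_univ s, hlt⟩))
        · intro hle; linarith
      rw [hUeq]
      linarith [not_le.1 hlt1]
  -- apply correlation gap to v = (c - B)⁺
  set v := fun s => max (c s - B) 0 with hvdef
  have hv0 : ∀ s, 0 ≤ v s := fun s => le_max_right _ _
  have hveq : univ.filter (fun s => 0 < v s) = U := by
    ext s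
    simp only [hvdef, hUdef, Finset.mem_filter, Finset.mem_univ, true_and, lt_max_iff]
    constructor
    · rintro (h | h)
      · linarith
      · exact absurd h (lt_irrefl 0)
    · intro h; left; linarith
  have hcg := corr_gap p hp0 hp1 (univ.filter (fun s => 0 < v s)).card v hv0 le_rfl
    (by rw [hveq]; exact hUle)
  -- main pointwise bound
  have hS' : ∀ s, s ∈ S ↔ B ≤ c s := by
    intro s
    simp only [hSdef, Finset.mem_filter, Finset.mem_univ, true_and]
  have hpoint : ∀ A : Finset (Fin m),
      (if (A ∩ S).Nonempty then B else 0) + A.fold max 0 v ≤ A.fold max 0 c :=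
    fun A => fold_split c hB0 S hS' A
  have hWnn := Wt_nonneg p hp0 hp1 (univ : Finset (Fin m))
  have hstep : B * (1 - ∏ s ∈ S, (1 - p s)) + expectedMax p v ≤ expectedMax p c := by
    rw [expectedMax_eq p v, expectedMax_eq p c]
    have e1 : B * (1 - ∏ s ∈ S, (1 - p s))
        = ∑ A ∈ (univ : Finset (Fin m)).powerset,
            Wt p univ A * (if (A ∩ S).Nonempty then B else 0) := by
      have e2 : ∀ A : Finset (Fin m), Wt p univ A * (if (A ∩ S).Nonempty then B else 0)
          = B * (if (A ∩ S).Nonempty then Wt p univ A else 0) := by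
        intro A; split <;> ring
      rw [Finset.sum_congr rfl (fun A _ => e2 A), ← Finset.mul_sum,
        sumWt_hit p (Finset.subset_univ S)]
    calc B * (1 - ∏ s ∈ S, (1 - p s))
          + ∑ A ∈ (univ : Finset (Fin m)).powerset, Wt p univ A * A.fold max 0 v
        = ∑ A ∈ (univ : Finset (Fin m)).powerset,
            Wt p univ A * ((if (A ∩ S).Nonempty then B else 0) + A.fold max 0 v) := by
          rw [e1, ← Finset.sum_add_distrib]
          exact Finset.sum_congr rfl fun A _ => (mul_add _ _ _).symm
      _ ≤ ∑ A ∈ (univ : Finset (Fin m)).powerset, Wt p univ A * A.fold max 0 c :=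
          Finset.sum_le_sum fun A _ => mul_le_mul_of_nonneg_left (hpoint A) (hWnn A)
  -- probability that some s in S fires is at least 1 - 1/e
  have hprod : ∏ s ∈ S, (1 - p s) ≤ (Real.exp 1)⁻¹ := by
    calc ∏ s ∈ S, (1 - p s) ≤ Real.exp (-∑ s ∈ S, p s) := prod_one_sub_le_exp p hp1 S
      _ ≤ Real.exp (-1) := Real.exp_le_exp.2 (by linarith)
      _ = (Real.exp 1)⁻¹ := Real.exp_neg 1
  have he1 : (1:ℝ) < Real.exp 1 := by linarith [Real.add_one_le_exp 1]
  have hγ : 0 < 1 - (Real.exp 1)⁻¹ := by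
    have : (Real.exp 1)⁻¹ < 1 := inv_lt_one_of_one_lt₀ he1
    linarith
  -- combine
  have hmain : (1 - (Real.exp 1)⁻¹) * (B + ∑ s, p s * v s) ≤ expectedMax p c := by
    have h1 : (1 - (Real.exp 1)⁻¹) * B ≤ B * (1 - ∏ s ∈ S, (1 - p s)) := by
      nlinarith
    have h2 := hcg
    nlinarith [hstep]
  -- costTrunc ≤ B + Σ p v
  have hct : costTrunc p c ≤ B + ∑ s, p s * v s := by
    have hbdd : BddBelow (Set.range (fun B' : ℝ => B' + ∑ s, p s * max (c s - B') 0)) := by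
      refine ⟨0, ?_⟩
      rintro z ⟨B', rfl⟩
      exact costTrunc_obj_nonneg p c hp0 hsum hc0 B'
    unfold costTrunc
    exact ciInf_le hbdd B
  calc (1 - (Real.exp 1)⁻¹) * costTrunc p c
      ≤ (1 - (Real.exp 1)⁻¹) * (B + ∑ s, p s * v s) :=
        mul_le_mul_of_nonneg_left hct hγ.le
    _ ≤ expectedMax p c := hmain

/-- An α-approximation for the truncated objective is an
`α/(1-1/e)`-approximation for the MinEMax (expected-max) objective. -/
theorem trunc_approx_to_minEMax_approx {m : ℕ} {F : Type*} (p : Fin m → ℝ)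
    (c : Fin m → F → ℝ) (α : ℝ) (hα : 1 ≤ α)
    (hp0 : ∀ s, 0 ≤ p s) (hp1 : ∀ s, p s ≤ 1) (hsum : 1 ≤ ∑ s, p s)
    (hc0 : ∀ s x, 0 ≤ c s x)
    (xT : F) (hxT : ∀ y : F, costTrunc p (fun s => c s xT) ≤ costTrunc p (fun s => c s y))
    (x : F) (hx : costTrunc p (fun s => c s x) ≤ α * costTrunc p (fun s => c s xT)) :
    ∀ y : F,
      expectedMax p (fun s => c s x) ≤
        (α / (1 - 1 / Real.exp 1)) * expectedMax p (fun s => c s y) := by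
  intro y
  have he1 : (1:ℝ) < Real.exp 1 := by linarith [Real.add_one_le_exp 1]
  have hγ : 0 < 1 - (Real.exp 1)⁻¹ := by
    have : (Real.exp 1)⁻¹ < 1 := inv_lt_one_of_one_lt₀ he1
    linarith
  have hA := expectedMax_le_costTrunc p (fun s => c s x) hp0 hp1 hsum (fun s => hc0 s x)
  have hC := costTrunc_le_expectedMax p (fun s => c s y) hp0 hp1 hsum (fun s => hc0 s y)
  have hchain : expectedMax p (fun s => c s x) ≤ α * costTrunc p (fun s => c s y) := by
    calc expectedMax p (fun s => c s x) ≤ costTrunc p (fun s => c s x) := hA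
      _ ≤ α * costTrunc p (fun s => c s xT) := hx
      _ ≤ α * costTrunc p (fun s => c s y) :=
          mul_le_mul_of_nonneg_left (hxT y) (by linarith)
  have hCT : costTrunc p (fun s => c s y) ≤ expectedMax p (fun s => c s y) / (1 - (Real.exp 1)⁻¹) :=
    (le_div_iff₀ hγ).2 (by linarith [hC])
  have hfinal : expectedMax p (fun s => c s x)
      ≤ α * (expectedMax p (fun s => c s y) / (1 - (Real.exp 1)⁻¹)) :=
    le_trans hchain (mul_le_mul_of_nonneg_left hCT (by linarith))
  have heq : α * (expectedMax p (fun s => c s y) / (1 - (Real.exp 1)⁻¹))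
      = (α / (1 - 1 / Real.exp 1)) * expectedMax p (fun s => c s y) := by
    rw [one_div]
    ring
  linarith [heq ▸ hfinal]
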